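/- Let γ_B ~ Gamma(shape m_B, rate λ_B) and γ_E ~ Gamma(shape m_E, rate λ_E) be independent. Then P(γ_B ≤ γ_E) = (λ_B^{m_B} λ_E^{m_E}/Γ(m_E)) ∑_{n=0}^∞ [λ_B^n / Γ(m_B+n+1)] · Γ(m_B+m_E+n)/(λ_B+λ_E)^{m_B+m_E+n}, where the series converges. -/

import Mathlib

open scoped ENNReal NNReal
open MeasureTheory ProbabilityTheory Real Set Filter Topology

namespace Stmt12Aux

noncomputable def pdfR (l s x : ℝ) : ℝ :=
  l ^ s / Real.Gamma s * x ^ (s - 1) * Real.exp (-(l * x))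

noncomputable def F (l s y : ℝ) : ℝ := ∫ x in (0:ℝ)..y, pdfR l s x

lemma intInt (l : ℝ) {s : ℝ} (hs : 0 < s) (y : ℝ) :
    IntervalIntegrable (pdfR l s) volume 0 y := by
  have h1 : IntervalIntegrable (fun x : ℝ => x ^ (s - 1)) volume 0 y :=
    intervalIntegral.intervalIntegrable_rpow' (by linarith)
  have h2 := (h1.const_mul (l ^ s / Real.Gamma s)).mul_continuousOn
    (g := fun x => Real.exp (-(l * x)))
    ((Real.continuous_exp.comp (continuous_const.mul continuous_id).neg).continuousOn)
  exact h2

lemma pdfR_nonneg {l s x : ℝ} (hl : 0 < l) (hs : 0 < s) (hx : 0 ≤ x) : 0 ≤ pdfR l s x := by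
  unfold pdfR
  have := Real.rpow_nonneg hx (s - 1)
  positivity

lemma step {l s y : ℝ} (hl : 0 < l) (hs : 0 < s) (hy : 0 ≤ y) :
    F l s y = l ^ s * y ^ s * Real.exp (-(l * y)) / Real.Gamma (s + 1) + F l (s + 1) y := by
  have hΓ : Real.Gamma (s + 1) = s * Real.Gamma s := Real.Gamma_add_one hs.ne'
  have hΓs : Real.Gamma s ≠ 0 := (Real.Gamma_pos_of_pos hs).ne'
  have hΓs1 : Real.Gamma (s + 1) ≠ 0 := (Real.Gamma_pos_of_pos (by linarith)).ne'
  set Φ : ℝ → ℝ := fun x => l ^ s / Real.Gamma (s + 1) * (x ^ s * Real.exp (-(l * x))) with hΦ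
  have hderiv : ∀ x ∈ Ioo (0:ℝ) y,
      HasDerivAt Φ (pdfR l s x - pdfR l (s + 1) x) x := by
    intro x hx
    have h1 : HasDerivAt (fun x : ℝ => x ^ s) (s * x ^ (s - 1)) x :=
      Real.hasDerivAt_rpow_const (Or.inl hx.1.ne')
    have h2 : HasDerivAt (fun x : ℝ => Real.exp (-(l * x))) (Real.exp (-(l * x)) * (-(l * 1))) x :=
      (((hasDerivAt_id x).const_mul l).neg).exp
    have h3 := ((h1.mul h2).const_mul (l ^ s / Real.Gamma (s + 1)))
    refine h3.congr_deriv ?_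
    unfold pdfR
    have hls1 : l ^ (s + 1) = l ^ s * l := Real.rpow_add_one hl.ne' s
    have hxs : x ^ (s + 1 - 1) = x ^ s := by norm_num
    rw [hls1, hxs, hΓ]
    field_simp
    ring
  have hcont : ContinuousOn Φ (Icc 0 y) := by
    intro x _
    have h1 : ContinuousAt (fun x : ℝ => x ^ s) x :=
      Real.continuousAt_rpow_const x s (Or.inr hs.le)
    exact (continuousAt_const.mul (h1.mul ((Real.continuous_exp.comp
      (continuous_const.mul continuous_id).neg).continuousAt))).continuousWithinAt
  have hint : IntervalIntegrable (fun x => pdfR l s x - pdfR l (s + 1) x) volume 0 y :=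
    (intInt l hs y).sub (intInt l (by linarith) y)
  have key := intervalIntegral.integral_eq_sub_of_hasDeriv_right_of_le hy hcont
    (fun x hx => (hderiv x hx).hasDerivWithinAt) hint
  have hΦ0 : Φ 0 = 0 := by
    simp [hΦ, Real.zero_rpow hs.ne']
  have hsub : F l s y - F l (s + 1) y = Φ y := by
    have hFsub : F l s y - F l (s + 1) y = ∫ x in (0:ℝ)..y, (pdfR l s x - pdfR l (s + 1) x) :=
      (intervalIntegral.integral_sub (intInt l hs y) (intInt l (by linarith) y)).symm
    rw [hFsub, key, hΦ0, sub_zero]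
  have : Φ y = l ^ s * y ^ s * Real.exp (-(l * y)) / Real.Gamma (s + 1) := by
    simp only [hΦ]; ring
  linarith [hsub, this.symm.le, this.le]

lemma F_nonneg {l s y : ℝ} (hl : 0 < l) (hs : 0 < s) (hy : 0 ≤ y) : 0 ≤ F l s y :=
  intervalIntegral.integral_nonneg hy (fun x hx => pdfR_nonneg hl hs hx.1)

lemma F_le {l s y : ℝ} (hl : 0 < l) (hs : 0 < s) (hy : 0 ≤ y) :
    F l s y ≤ l ^ s * y ^ s / Real.Gamma (s + 1) := by
  have hΓ : Real.Gamma (s + 1) = s * Real.Gamma s := Real.Gamma_add_one hs.ne'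
  have hΓs : 0 < Real.Gamma s := Real.Gamma_pos_of_pos hs
  have h1 : IntervalIntegrable (fun x : ℝ => l ^ s / Real.Gamma s * x ^ (s - 1)) volume 0 y :=
    (intervalIntegral.intervalIntegrable_rpow' (by linarith)).const_mul _
  have hle : F l s y ≤ ∫ x in (0:ℝ)..y, l ^ s / Real.Gamma s * x ^ (s - 1) := by
    apply intervalIntegral.integral_mono_on hy (intInt l hs y) h1
    intro x hx
    unfold pdfR
    have h2 : Real.exp (-(l * x)) ≤ 1 := Real.exp_le_one_iff.mpr (by nlinarith [hx.1])
    have h3 : 0 ≤ l ^ s / Real.Gamma s * x ^ (s - 1) := by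
      have := Real.rpow_nonneg hx.1 (s - 1); positivity
    nlinarith [h3, h2, Real.exp_nonneg (-(l * x))]
  calc F l s y ≤ ∫ x in (0:ℝ)..y, l ^ s / Real.Gamma s * x ^ (s - 1) := hle
    _ = l ^ s / Real.Gamma s * ((y ^ (s - 1 + 1) - 0 ^ (s - 1 + 1)) / (s - 1 + 1)) := by
        rw [intervalIntegral.integral_const_mul, integral_rpow (Or.inl (by linarith))]
    _ = l ^ s * y ^ s / Real.Gamma (s + 1) := by
        have h0 : (0:ℝ) ^ (s - 1 + 1) = 0 := Real.zero_rpow (by intro h; linarith)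
        have h1 : s - 1 + 1 = s := by ring
        rw [h0, h1, hΓ, sub_zero]
        rw [div_mul_div_comm, mul_comm (Real.Gamma s) s]

lemma partial_sum {l s y : ℝ} (hl : 0 < l) (hs : 0 < s) (hy : 0 ≤ y) (N : ℕ) :
    ∑ n ∈ Finset.range N, l ^ (s + n) * y ^ (s + n) * Real.exp (-(l * y)) / Real.Gamma (s + n + 1)
      = F l s y - F l (s + N) y := by
  induction N with
  | zero => simp
  | succ N ih =>
    rw [Finset.sum_range_succ, ih]
    have hsN : 0 < s + N := by positivity
    have hstep := step hl hsN hy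
    push_cast
    rw [show s + (N + 1 : ℝ) = s + N + 1 by ring]
    linarith [hstep]

lemma tendsto_tail {l s y : ℝ} (hl : 0 < l) (hs : 0 < s) (hy : 0 < y) :
    Tendsto (fun N : ℕ => F l (s + N) y) atTop (𝓝 0) := by
  set z : ℝ := l * y with hz
  have hz0 : 0 < z := mul_pos hl hy
  set u : ℕ → ℝ := fun N => l ^ (s + N) * y ^ (s + N) / Real.Gamma (s + N + 1) with hu
  have hu_eq : ∀ N : ℕ, u N = z ^ (s + N) / Real.Gamma (s + N + 1) := by
    intro N
    simp only [hu, hz, Real.mul_rpow hl.le hy.le]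
  have hub : ∀ N : ℕ, u N ≤ u 0 * (z ^ N / (N.factorial : ℝ)) := by
    intro N
    induction N with
    | zero => simp
    | succ N ih =>
      have hsN : (0:ℝ) < s + N + 1 := by positivity
      have hrec : u (N + 1) = u N * (z / (s + N + 1)) := by
        rw [hu_eq, hu_eq]
        have e1 : z ^ (s + (N + 1 : ℕ)) = z ^ (s + N) * z := by
          push_cast
          rw [show s + ((N : ℝ) + 1) = (s + N) + 1 by ring, Real.rpow_add_one hz0.ne']
        have e2 : Real.Gamma (s + (N + 1 : ℕ) + 1) = (s + N + 1) * Real.Gamma (s + N + 1) := by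
          push_cast
          rw [show s + ((N : ℝ) + 1) + 1 = (s + N + 1) + 1 by ring,
            Real.Gamma_add_one (by positivity : s + (N:ℝ) + 1 ≠ 0)]
        rw [e1, e2]
        have hΓ : 0 < Real.Gamma (s + N + 1) := Real.Gamma_pos_of_pos (by positivity)
        field_simp
      have hun : 0 ≤ u N := by
        rw [hu_eq]
        have h1 : 0 ≤ z ^ (s + N) := Real.rpow_nonneg hz0.le _
        have h2 : 0 < Real.Gamma (s + N + 1) := Real.Gamma_pos_of_pos (by positivity)
        positivity
      calc u (N + 1) = u N * (z / (s + N + 1)) := hrec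
        _ ≤ (u 0 * (z ^ N / (N.factorial : ℝ))) * (z / (s + N + 1)) := by
            apply mul_le_mul_of_nonneg_right ih
            positivity
        _ ≤ (u 0 * (z ^ N / (N.factorial : ℝ))) * (z / (N + 1)) := by
            have hu0 : 0 ≤ u 0 := by
              rw [hu_eq]
              have h1 : 0 ≤ z ^ (s + (0:ℕ)) := Real.rpow_nonneg hz0.le _
              have h2 : 0 < Real.Gamma (s + (0:ℕ) + 1) := Real.Gamma_pos_of_pos (by positivity)
              positivity
            have hzN : (0:ℝ) ≤ z ^ N := by positivity
            have hfac : (0:ℝ) ≤ (N.factorial : ℝ)⁻¹ := by positivity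
            gcongr
            linarith
        _ = u 0 * (z ^ (N + 1) / ((N + 1).factorial : ℝ)) := by
            rw [pow_succ, Nat.factorial_succ]
            push_cast
            field_simp
  have hun : ∀ N : ℕ, 0 ≤ u N := by
    intro N
    rw [hu_eq]
    have h1 : 0 ≤ z ^ (s + N) := Real.rpow_nonneg hz0.le _
    have h2 : 0 < Real.Gamma (s + N + 1) := Real.Gamma_pos_of_pos (by positivity)
    positivity
  have hu_to : Tendsto u atTop (𝓝 0) := by
    have h1 : Tendsto (fun N : ℕ => u 0 * (z ^ N / (N.factorial : ℝ))) atTop (𝓝 (u 0 * 0)) :=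
      (FloorSemiring.tendsto_pow_div_factorial_atTop z).const_mul (u 0)
    rw [mul_zero] at h1
    exact squeeze_zero hun hub h1
  apply squeeze_zero (fun N => F_nonneg hl (by positivity) hy.le) (fun N => ?_) hu_to
  have := F_le hl (by positivity : (0:ℝ) < s + N) hy.le
  rw [hu_eq] at *
  calc F l (s + N) y ≤ l ^ (s + N) * y ^ (s + N) / Real.Gamma (s + N + 1) := this
    _ = z ^ (s + N) / Real.Gamma (s + N + 1) := by rw [hz, Real.mul_rpow hl.le hy.le]

lemma hasSum_F {l s y : ℝ} (hl : 0 < l) (hs : 0 < s) (hy : 0 ≤ y) :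
    HasSum (fun n : ℕ => (l * y) ^ (s + n) * Real.exp (-(l * y)) / Real.Gamma (s + n + 1))
      (F l s y) := by
  rcases eq_or_lt_of_le hy with h0 | hpos
  · have h1 : (fun n : ℕ => (l * y) ^ (s + n) * Real.exp (-(l * y)) / Real.Gamma (s + n + 1))
        = fun _ => 0 := by
      funext n
      rw [← h0, mul_zero, Real.zero_rpow (by positivity : s + (n:ℝ) ≠ 0)]
      simp
    have h2 : F l s y = 0 := by rw [← h0]; simp [F]
    rw [h1, h2]
    exact hasSum_zero
  · have hnn : ∀ n : ℕ, 0 ≤ (l * y) ^ (s + n) * Real.exp (-(l * y)) / Real.Gamma (s + n + 1) := by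
      intro n
      have h1 : 0 ≤ (l * y) ^ (s + (n:ℝ)) := Real.rpow_nonneg (by positivity) _
      have h2 : 0 < Real.Gamma (s + n + 1) := Real.Gamma_pos_of_pos (by positivity)
      positivity
    rw [hasSum_iff_tendsto_nat_of_nonneg hnn]
    have heq : ∀ N : ℕ, ∑ n ∈ Finset.range N,
        (l * y) ^ (s + n) * Real.exp (-(l * y)) / Real.Gamma (s + n + 1)
        = F l s y - F l (s + N) y := by
      intro N
      rw [← partial_sum hl hs hy N]
      refine Finset.sum_congr rfl fun n _ => ?_
      rw [Real.mul_rpow hl.le hy]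
    simp_rw [heq]
    have := (tendsto_const_nhds (x := F l s y) (f := atTop (α := ℕ))).sub (tendsto_tail hl hs hpos)
    simpa using this

lemma gamma_Iic {l s y : ℝ} (hl : 0 < l) (hs : 0 < s) (hy : 0 ≤ y) :
    gammaMeasure s l (Iic y) = ENNReal.ofReal (F l s y) := by
  rw [gammaMeasure, withDensity_apply _ measurableSet_Iic,
    lintegral_Iic_eq_lintegral_Iio_add_Icc _ hy, lintegral_gammaPDF_of_nonpos le_rfl, zero_add]
  have hIcc : ∫⁻ x in Icc 0 y, gammaPDF s l x = ∫⁻ x in Icc 0 y, ENNReal.ofReal (pdfR l s x) := by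
    refine setLIntegral_congr_fun measurableSet_Icc (fun x hx => ?_)
    rw [gammaPDF_of_nonneg hx.1]
    rfl
  rw [hIcc]
  have hInt : IntegrableOn (pdfR l s) (Icc 0 y) volume := by
    rw [integrableOn_Icc_iff_integrableOn_Ioc]
    exact (intervalIntegrable_iff_integrableOn_Ioc_of_le hy).mp (intInt l hs y)
  rw [← ofReal_integral_eq_lintegral_ofReal hInt]
  · congr 1
    rw [integral_Icc_eq_integral_Ioc, F, intervalIntegral.integral_of_le hy]
  · refine (ae_restrict_iff' measurableSet_Icc).mpr (ae_of_all _ fun x hx => ?_)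
    exact pdfR_nonneg hl hs hx.1

lemma gamma_Iic_tsum {l s y : ℝ} (hl : 0 < l) (hs : 0 < s) (hy : 0 ≤ y) :
    gammaMeasure s l (Iic y)
      = ∑' n : ℕ, ENNReal.ofReal ((l * y) ^ (s + n) * Real.exp (-(l * y)) / Real.Gamma (s + n + 1)) := by
  have hsum := hasSum_F hl hs hy
  have hnn : ∀ n : ℕ, 0 ≤ (l * y) ^ (s + n) * Real.exp (-(l * y)) / Real.Gamma (s + n + 1) := by
    intro n
    have h1 : 0 ≤ (l * y) ^ (s + (n:ℝ)) := Real.rpow_nonneg (by positivity) _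
    have h2 : 0 < Real.Gamma (s + n + 1) := Real.Gamma_pos_of_pos (by positivity)
    positivity
  rw [gamma_Iic hl hs hy, ← hsum.tsum_eq, ENNReal.ofReal_tsum_of_nonneg hnn hsum.summable]

end Stmt12Aux

open Stmt12Aux in
theorem stmt12 {Ω : Type*} [MeasurableSpace Ω] (μ : Measure Ω) [IsProbabilityMeasure μ]
    (X Y : Ω → ℝ) (mB mE lB lE : ℝ)
    (hmB : 0 < mB) (hmE : 0 < mE) (hlB : 0 < lB) (hlE : 0 < lE)
    (hXm : Measurable X) (hYm : Measurable Y)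
    (hindep : IndepFun X Y μ)
    (hX : Measure.map X μ = gammaMeasure mB lB)
    (hY : Measure.map Y μ = gammaMeasure mE lE) :
    HasSum (fun n : ℕ =>
        lB ^ mB * lE ^ mE / Real.Gamma mE *
          (lB ^ (n : ℝ) / Real.Gamma (mB + n + 1)) *
          (Real.Gamma (mB + mE + n) / (lB + lE) ^ (mB + mE + n)))
      ((μ {ω | X ω ≤ Y ω}).toReal) := by
  classical
  haveI hPB : IsProbabilityMeasure (gammaMeasure mB lB) := isProbabilityMeasure_gammaMeasure hmB hlB
  haveI hPE : IsProbabilityMeasure (gammaMeasure mE lE) := isProbabilityMeasure_gammaMeasure hmE hlE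
  set f : ℕ → ℝ := fun n =>
    lB ^ mB * lE ^ mE / Real.Gamma mE * (lB ^ (n : ℝ) / Real.Gamma (mB + n + 1)) *
      (Real.Gamma (mB + mE + n) / (lB + lE) ^ (mB + mE + n)) with hf
  have hfnn : ∀ n, 0 ≤ f n := by
    intro n
    have hBE : (0:ℝ) < lB + lE := by linarith
    simp only [hf]
    positivity
  have hmap : μ.map (fun ω => (Y ω, X ω)) = (gammaMeasure mE lE).prod (gammaMeasure mB lB) := by
    rw [← hY, ← hX]
    exact (indepFun_iff_map_prod_eq_prod_map_map hYm.aemeasurable hXm.aemeasurable).mp hindep.symm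
  have hsm : MeasurableSet {p : ℝ × ℝ | p.2 ≤ p.1} := measurableSet_le measurable_snd measurable_fst
  have h1 : μ {ω | X ω ≤ Y ω} = ∫⁻ y, gammaMeasure mB lB (Iic y) ∂(gammaMeasure mE lE) := by
    have hma := Measure.map_apply (μ := μ) (hYm.prodMk hXm) hsm
    rw [hmap] at hma
    calc μ {ω | X ω ≤ Y ω}
        = μ ((fun ω => (Y ω, X ω)) ⁻¹' {p : ℝ × ℝ | p.2 ≤ p.1}) := rfl
      _ = (gammaMeasure mE lE).prod (gammaMeasure mB lB) {p : ℝ × ℝ | p.2 ≤ p.1} := hma.symm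
      _ = ∫⁻ y, gammaMeasure mB lB (Prod.mk y ⁻¹' {p : ℝ × ℝ | p.2 ≤ p.1})
            ∂(gammaMeasure mE lE) := Measure.prod_apply hsm
      _ = ∫⁻ y, gammaMeasure mB lB (Iic y) ∂(gammaMeasure mE lE) := rfl
  have hmono : Measurable (fun y : ℝ => gammaMeasure mB lB (Iic y)) :=
    Monotone.measurable (fun a b hab => measure_mono (Iic_subset_Iic.mpr hab))
  have hpdfE : Measurable (gammaPDF mE lE) := (measurable_gammaPDFReal mE lE).ennreal_ofReal
  have h2 : ∫⁻ y, gammaMeasure mB lB (Iic y) ∂(gammaMeasure mE lE)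
      = ∫⁻ y, gammaPDF mE lE y * gammaMeasure mB lB (Iic y) := by
    rw [gammaMeasure, lintegral_withDensity_eq_lintegral_mul _ hpdfE hmono]
    rfl
  set T : ℕ → ℝ → ℝ≥0∞ := fun n y =>
    ENNReal.ofReal ((lB * y) ^ (mB + n) * Real.exp (-(lB * y)) / Real.Gamma (mB + n + 1))
    with hT
  have h0ae : ∀ᵐ y : ℝ, y ≠ 0 := by
    rw [ae_iff]
    simp only [not_not, setOf_eq_eq_singleton]
    exact measure_singleton 0
  have h3 : ∫⁻ y, gammaPDF mE lE y * gammaMeasure mB lB (Iic y)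
      = ∫⁻ y, ∑' n, gammaPDF mE lE y * T n y := by
    refine lintegral_congr_ae ?_
    filter_upwards [h0ae] with y hy
    rcases lt_or_gt_of_ne hy with hneg | hpos
    · rw [gammaPDF_of_neg hneg]
      simp
    · rw [gamma_Iic_tsum hlB hmB hpos.le, ENNReal.tsum_mul_left]
  have hTm : ∀ n : ℕ, Measurable (T n) := by
    intro n
    apply Measurable.ennreal_ofReal
    exact (((measurable_id.const_mul lB).pow_const _).mul
      ((measurable_id.const_mul lB).neg.exp)).div_const _
  have h4 : ∫⁻ y, ∑' n, gammaPDF mE lE y * T n y = ∑' n, ∫⁻ y, gammaPDF mE lE y * T n y :=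
    lintegral_tsum (fun n => (hpdfE.mul (hTm n)).aemeasurable)
  have h5 : ∀ n : ℕ, ∫⁻ y, gammaPDF mE lE y * T n y = ENNReal.ofReal (f n) := by
    intro n
    have hBE : (0:ℝ) < lB + lE := by linarith
    have hgoal : ∀ᵐ y : ℝ, gammaPDF mE lE y * T n y
        = ENNReal.ofReal (f n) * gammaPDF (mB + mE + n) (lB + lE) y := by
      filter_upwards [h0ae] with y hy
      rcases lt_or_gt_of_ne hy with hneg | hpos
      · rw [gammaPDF_of_neg hneg, gammaPDF_of_neg hneg]
        simp
      · rw [gammaPDF_of_nonneg hpos.le, gammaPDF_of_nonneg hpos.le, hT]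
        have hAnn : 0 ≤ lE ^ mE / Real.Gamma mE * y ^ (mE - 1) * Real.exp (-(lE * y)) := by
          have h1 : 0 ≤ y ^ (mE - 1) := Real.rpow_nonneg hpos.le _
          have h2 : 0 < Real.Gamma mE := Real.Gamma_pos_of_pos hmE
          positivity
        rw [← ENNReal.ofReal_mul hAnn, ← ENNReal.ofReal_mul (hfnn n)]
        congr 1
        have e1 : (lB * y) ^ (mB + (n:ℝ)) = lB ^ mB * lB ^ (n:ℝ) * y ^ (mB + (n:ℝ)) := by
          rw [Real.mul_rpow hlB.le hpos.le, Real.rpow_add hlB]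
        have e2 : y ^ (mB + mE + (n:ℝ) - 1) = y ^ (mE - 1) * y ^ (mB + (n:ℝ)) := by
          rw [← Real.rpow_add hpos]
          congr 1
          ring
        have e3 : Real.exp (-((lB + lE) * y)) = Real.exp (-(lE * y)) * Real.exp (-(lB * y)) := by
          rw [← Real.exp_add]
          congr 1
          ring
        rw [e1, e2, e3, hf]
        have hΓE : Real.Gamma mE ≠ 0 := (Real.Gamma_pos_of_pos hmE).ne'
        have hΓ1 : Real.Gamma (mB + n + 1) ≠ 0 :=
          (Real.Gamma_pos_of_pos (by positivity)).ne'
        have hΓ2 : Real.Gamma (mB + mE + n) ≠ 0 :=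
          (Real.Gamma_pos_of_pos (by positivity)).ne'
        have hP : ((lB + lE) ^ (mB + mE + (n:ℝ))) ≠ 0 := (Real.rpow_pos_of_pos hBE _).ne'
        field_simp
    have hg : Measurable (gammaPDF (mB + mE + (n:ℝ)) (lB + lE)) :=
      (measurable_gammaPDFReal _ _).ennreal_ofReal
    rw [lintegral_congr_ae hgoal, lintegral_const_mul _ hg,
      lintegral_gammaPDF_eq_one (by positivity) hBE, mul_one]
  have key : μ {ω | X ω ≤ Y ω} = ∑' n, ENNReal.ofReal (f n) := by
    rw [h1, h2, h3, h4]
    exact tsum_congr h5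
  have hne : (∑' n, ENNReal.ofReal (f n)) ≠ ⊤ := by
    rw [← key]
    exact measure_ne_top μ _
  have hto : (fun n => (ENNReal.ofReal (f n)).toReal) = f :=
    funext fun n => ENNReal.toReal_ofReal (hfnn n)
  have hsumm : Summable f := by
    have := ENNReal.summable_toReal hne
    rwa [hto] at this
  have hts : (μ {ω | X ω ≤ Y ω}).toReal = ∑' n, f n := by
    rw [key, ENNReal.tsum_toReal_eq (fun n => ENNReal.ofReal_ne_top)]
    exact tsum_congr fun n => ENNReal.toReal_ofReal (hfnn n)
  rw [hts]
  exact hsumm.hasSum
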